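/- Let ρ∞ > 0, θ∞ > 0, u∞ < 0, r > 0 and 0 < δ < r²/2. Let D₁M∞(η₁, η') := −((η₁ − u∞)/θ∞) M∞(η₁, η') denote the partial derivative of M∞ in the first velocity variable. Then there exists a constant C > 0 such that for every Φ ∈ [0, δ] and every ξ = (ξ₁, ξ') ∈ ℝ³ with ξ₁ ≤ −r, setting ζ₁ := −√(ξ₁² − 2Φ), one has |D₁M∞(ζ₁, ξ') − D₁M∞(ξ₁, ξ')| ≤ C (1 + |ξ₁|²) M∞(ξ) Φ. -/

import Mathlib

open MeasureTheory Real Set Filter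

set_option maxHeartbeats 800000


/-- The Maxwellian `M∞` with parameters `ρ∞, θ∞, u∞`, where `ξ = (ξ₁, ξ₂, ξ₃)`. -/
noncomputable def Maxwellian (ρ θ u : ℝ) (ξ : ℝ × ℝ × ℝ) : ℝ :=
  ρ * (2 * π * θ) ^ (-(3:ℝ)/2) *
    Real.exp (-(((ξ.1 - u)^2 + ξ.2.1^2 + ξ.2.2^2) / (2 * θ)))

/-- `D₁M∞(η₁,η') = −((η₁−u)/θ) M∞(η₁,η')`, the partial derivative of `M∞` in the
first velocity variable. -/
noncomputable def MaxwellianD1 (ρ θ u : ℝ) (ξ : ℝ × ℝ × ℝ) : ℝ :=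
  -((ξ.1 - u) / θ) * Maxwellian ρ θ u ξ

/-- `|D₁M∞(ζ₁,ξ') − D₁M∞(ξ₁,ξ')| ≤ C (1+|ξ₁|²) M∞(ξ) Φ`
for `ζ₁ = -√(ξ₁² - 2Φ)`. -/
lemma abs_exp_sub_one_le' (t : ℝ) : |Real.exp t - 1| ≤ |t| * Real.exp |t| := by
  rcases le_or_gt 0 t with h | h
  · rw [abs_of_nonneg h, abs_of_nonneg (by linarith [Real.one_le_exp h] : (0:ℝ) ≤ Real.exp t - 1)]
    have h1 : 1 - t ≤ Real.exp (-t) := by linarith [Real.add_one_le_exp (-t)]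
    have h2 : Real.exp (-t) * Real.exp t = 1 := by rw [← Real.exp_add]; simp
    nlinarith [Real.exp_pos t, mul_le_mul_of_nonneg_right h1 (Real.exp_pos t).le]
  · have he1 : Real.exp t < 1 := by
      calc Real.exp t < Real.exp 0 := Real.exp_lt_exp.mpr h
        _ = 1 := Real.exp_zero
    rw [abs_of_neg h, abs_of_nonpos (by linarith : Real.exp t - 1 ≤ 0)]
    have h1 : t + 1 ≤ Real.exp t := Real.add_one_le_exp t
    have h2 : (1:ℝ) ≤ Real.exp (-t) := Real.one_le_exp (by linarith)
    nlinarith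

theorem shifted_maxwellian_derivative_difference_bound
    (ρ θ u r δ : ℝ) (hρ : 0 < ρ) (hθ : 0 < θ) (hu : u < 0) (hr : 0 < r)
    (hδ : 0 < δ) (hδr : δ < r^2 / 2) :
    ∃ C > 0, ∀ Φ ∈ Set.Icc (0:ℝ) δ, ∀ ξ₁ ξ₂ ξ₃ : ℝ, ξ₁ ≤ -r →
      |MaxwellianD1 ρ θ u (-Real.sqrt (ξ₁^2 - 2*Φ), ξ₂, ξ₃) - MaxwellianD1 ρ θ u (ξ₁, ξ₂, ξ₃)|
        ≤ C * (1 + |ξ₁|^2) * Maxwellian ρ θ u (ξ₁, ξ₂, ξ₃) * Φ := by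
  set T : ℝ := (δ/θ) * (1 + 2*|u|/r) with hT
  clear_value T
  obtain ⟨K, hKpos, hK⟩ : ∃ K : ℝ, 0 < K ∧ K = Real.exp T := ⟨_, Real.exp_pos T, rfl⟩
  refine ⟨K * (2/r + (1 + 2*|u|/r) * (1 + |u|) / θ) / θ,
    div_pos (mul_pos hKpos (by positivity)) hθ, ?_⟩
  intro Φ hΦ ξ₁ ξ₂ ξ₃ hξ
  obtain ⟨hΦ0, hΦδ⟩ := hΦ
  have hξneg : ξ₁ < 0 := by linarith
  have hξr : r ≤ -ξ₁ := by linarith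
  have hξ2 : r^2 ≤ ξ₁^2 := by nlinarith
  have h2Φ : 0 ≤ ξ₁^2 - 2*Φ := by nlinarith
  obtain ⟨s, hs0, hs2, hsg⟩ : ∃ s : ℝ, 0 ≤ s ∧ s^2 = ξ₁^2 - 2*Φ ∧
      s = Real.sqrt (ξ₁^2 - 2*Φ) :=
    ⟨_, Real.sqrt_nonneg _, Real.sq_sqrt h2Φ, rfl⟩
  rw [← hsg]
  have hs_le : s ≤ -ξ₁ := by nlinarith [hs2]
  obtain ⟨d, hd, hd0⟩ : ∃ d : ℝ, d = -s - ξ₁ ∧ 0 ≤ d := ⟨_, rfl, by linarith⟩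
  have hdr : d * r ≤ 2*Φ := by
    have h1 : d * (-ξ₁ + s) = 2*Φ := by rw [hd]; nlinarith [hs2]
    nlinarith
  have hdle : d ≤ 2*Φ/r := by rw [le_div_iff₀ hr]; exact hdr
  obtain ⟨t, ht⟩ : ∃ t : ℝ, t = (2*Φ + 2*u*d) / (2*θ) := ⟨_, rfl⟩
  obtain ⟨M, hM, hMpos⟩ : ∃ M : ℝ, M = Maxwellian ρ θ u (ξ₁, ξ₂, ξ₃) ∧ 0 < M := by
    refine ⟨_, rfl, ?_⟩
    unfold Maxwellian
    have : (0:ℝ) < 2 * π * θ := by positivity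
    positivity
  -- shifted Maxwellian
  have hkey : (-s - u)^2 = (ξ₁ - u)^2 - 2*θ*t := by
    rw [ht, hd]; field_simp; linear_combination hs2
  have hMζ : Maxwellian ρ θ u (-s, ξ₂, ξ₃) = M * Real.exp t := by
    have hexp : Real.exp (-((((-s:ℝ) - u)^2 + ξ₂^2 + ξ₃^2) / (2*θ)))
        = Real.exp (-(((ξ₁ - u)^2 + ξ₂^2 + ξ₃^2) / (2*θ))) * Real.exp t := by
      rw [← Real.exp_add]; congr 1
      rw [hkey]; field_simp; ring
    rw [hM]; unfold Maxwellian; dsimp only; rw [hexp]; ring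
  -- the difference identity
  have heq : MaxwellianD1 ρ θ u (-s, ξ₂, ξ₃) - MaxwellianD1 ρ θ u (ξ₁, ξ₂, ξ₃)
      = -(M/θ) * (d * Real.exp t + (ξ₁ - u) * (Real.exp t - 1)) := by
    unfold MaxwellianD1
    rw [hMζ, ← hM, hd]
    field_simp
    ring
  -- bounds on t
  have hud : 2*u*d ≤ 0 := mul_nonpos_of_nonpos_of_nonneg (by nlinarith) hd0
  have hud2 : -2*|u| * (2*Φ/r) ≤ 2*u*d := by
    have h1 : -|u| ≤ u := neg_abs_le u
    have h2 : 0 ≤ |u| := abs_nonneg u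
    nlinarith
  have hnum : |2*Φ + 2*u*d| ≤ 2*Φ*(1 + 2*|u|/r) := by
    have h0 : 0 ≤ Φ * (2*|u|/r) := by positivity
    rw [abs_le]
    constructor
    · ring_nf at hud2 ⊢
      linarith only [hud2, hΦ0]
    · ring_nf at h0 ⊢
      linarith only [hud, h0]
  have habs_t : |t| ≤ Φ * (1 + 2*|u|/r) / θ := by
    have h2θ : (0:ℝ) < 2*θ := by linarith
    rw [ht, abs_div, abs_of_pos h2θ]
    calc |2*Φ + 2*u*d| / (2*θ) ≤ (2*Φ*(1 + 2*|u|/r)) / (2*θ) := by gcongr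
      _ = Φ * (1 + 2*|u|/r) / θ := by field_simp
  have htT : |t| ≤ T := by
    refine habs_t.trans ?_
    rw [hT, div_mul_eq_mul_div]
    gcongr
  have hexpt : Real.exp t ≤ K := by
    rw [hK]; exact Real.exp_le_exp.mpr ((le_abs_self t).trans htT)
  have hexpabs : Real.exp |t| ≤ K := by
    rw [hK]; exact Real.exp_le_exp.mpr htT
  -- bound the bracket
  have hbr : |d * Real.exp t + (ξ₁ - u) * (Real.exp t - 1)|
      ≤ (2*Φ/r) * K + |ξ₁ - u| * (Φ * (1 + 2*|u|/r) / θ * K) := by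
    calc |d * Real.exp t + (ξ₁ - u) * (Real.exp t - 1)|
        ≤ |d * Real.exp t| + |(ξ₁ - u) * (Real.exp t - 1)| := abs_add_le _ _
      _ = d * Real.exp t + |ξ₁ - u| * |Real.exp t - 1| := by
          rw [abs_mul, abs_mul, abs_of_nonneg hd0, abs_of_nonneg (Real.exp_pos t).le]
      _ ≤ (2*Φ/r) * K + |ξ₁ - u| * (Φ * (1 + 2*|u|/r) / θ * K) := by
          have hb1 : d * Real.exp t ≤ (2*Φ/r) * K :=
            mul_le_mul hdle hexpt (Real.exp_pos t).le (by positivity)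
          have hb2 : |Real.exp t - 1| ≤ Φ * (1 + 2*|u|/r) / θ * K :=
            (abs_exp_sub_one_le' t).trans
              (mul_le_mul habs_t hexpabs (Real.exp_pos _).le (by positivity))
          have hb3 := mul_le_mul_of_nonneg_left hb2 (abs_nonneg (ξ₁ - u))
          linarith only [hb1, hb3]
  have hxi : |ξ₁ - u| ≤ (1 + |u|) * (1 + ξ₁^2) := by
    have h1 : |ξ₁ - u| ≤ |ξ₁| + |u| := abs_sub _ _
    have h2 : |ξ₁| ≤ 1 + ξ₁^2 := by nlinarith [abs_nonneg ξ₁, sq_abs ξ₁]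
    have h3 : 0 ≤ |u| * ξ₁^2 := mul_nonneg (abs_nonneg u) (sq_nonneg ξ₁)
    have h4 := mul_le_mul_of_nonneg_left h2 (abs_nonneg u)
    linarith only [h1, h2, h3, h4, sq_nonneg ξ₁, abs_nonneg u]
  -- final assembly
  rw [heq, abs_mul, abs_neg, abs_of_nonneg (div_pos hMpos hθ).le, sq_abs]
  have hbr2 : |d * Real.exp t + (ξ₁ - u) * (Real.exp t - 1)|
      ≤ K * (2/r + (1 + 2*|u|/r) * (1 + |u|) / θ) * (1 + ξ₁^2) * Φ := by
    refine hbr.trans ?_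
    have hone : (1:ℝ) ≤ 1 + ξ₁^2 := by linarith only [sq_nonneg ξ₁]
    have h1 : (2*Φ/r) * K ≤ K * (2/r) * (1 + ξ₁^2) * Φ := by
      have h2 : (2*Φ/r) * K = K * (2/r) * 1 * Φ := by ring
      rw [h2]
      have : (0:ℝ) ≤ K * (2/r) * Φ := by
        apply mul_nonneg (mul_nonneg hKpos.le (by positivity)) hΦ0
      nlinarith [this, hone]
    have h2 : |ξ₁ - u| * (Φ * (1 + 2*|u|/r) / θ * K)
        ≤ K * ((1 + 2*|u|/r) * (1 + |u|) / θ) * (1 + ξ₁^2) * Φ := by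
      have e : K * ((1 + 2*|u|/r) * (1 + |u|) / θ) * (1 + ξ₁^2) * Φ
          = ((1 + |u|) * (1 + ξ₁^2)) * (Φ * (1 + 2*|u|/r) / θ * K) := by ring
      rw [e]
      exact mul_le_mul_of_nonneg_right hxi
        (mul_nonneg (by positivity) hKpos.le)
    calc (2*Φ/r) * K + |ξ₁ - u| * (Φ * (1 + 2*|u|/r) / θ * K)
        ≤ K * (2/r) * (1 + ξ₁^2) * Φ + K * ((1 + 2*|u|/r) * (1 + |u|) / θ) * (1 + ξ₁^2) * Φ := by
          linarith only [h1, h2]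
      _ = K * (2/r + (1 + 2*|u|/r) * (1 + |u|) / θ) * (1 + ξ₁^2) * Φ := by ring
  calc M/θ * |d * Real.exp t + (ξ₁ - u) * (Real.exp t - 1)|
      ≤ M/θ * (K * (2/r + (1 + 2*|u|/r) * (1 + |u|) / θ) * (1 + ξ₁^2) * Φ) :=
        mul_le_mul_of_nonneg_left hbr2 (div_pos hMpos hθ).le
    _ = K * (2/r + (1 + 2*|u|/r) * (1 + |u|) / θ) / θ * (1 + ξ₁^2) * M * Φ := by ring
    _ = K * (2/r + (1 + 2*|u|/r) * (1 + |u|) / θ) / θ * (1 + ξ₁^2)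
        * Maxwellian ρ θ u (ξ₁, ξ₂, ξ₃) * Φ := by rw [hM]
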